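/- Let U, U* ∈ ℝ^{N×r} with U*ᵀU* = b²I_r, R ∈ ℝ^{r×r} orthogonal, and suppose ‖U − U*R‖_F² ≤ C₁ for some C₁ ≥ 0. Then ⟨U(UᵀU − b²I_r), U − U*R⟩ ≥ (1/4)‖UᵀU − b²I_r‖_F² − (1/4)‖U − U*R‖_F⁴ ≥ (1/4)‖UᵀU − b²I_r‖_F² − (C₁/4)‖U − U*R‖_F². -/
import Mathlib


open Matrix

/-- Frobenius norm of a real matrix. -/
noncomputable def frob {m n : Type*} [Fintype m] [Fintype n] (M : Matrix m n ℝ) : ℝ :=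
  Real.sqrt (∑ i, ∑ j, (M i j) ^ 2)

/-- Trace inner product `⟨A,B⟩ = tr(AᵀB)` on real matrices. -/
noncomputable def minner {m n : Type*} [Fintype m] [Fintype n] (A B : Matrix m n ℝ) : ℝ :=
  Matrix.trace (Aᵀ * B)

lemma frob_nonneg {m n : Type*} [Fintype m] [Fintype n] (M : Matrix m n ℝ) :
    0 ≤ frob M := Real.sqrt_nonneg _

lemma frob_sq {m n : Type*} [Fintype m] [Fintype n] (M : Matrix m n ℝ) :
    frob M ^ 2 = ∑ i, ∑ j, (M i j) ^ 2 := by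
  apply Real.sq_sqrt
  positivity

lemma minner_eq_sum {m n : Type*} [Fintype m] [Fintype n] (A B : Matrix m n ℝ) :
    minner A B = ∑ i, ∑ j, A i j * B i j := by
  unfold minner
  simp only [Matrix.trace, Matrix.diag, Matrix.mul_apply, Matrix.transpose_apply]
  rw [Finset.sum_comm]

lemma minner_self {m n : Type*} [Fintype m] [Fintype n] (M : Matrix m n ℝ) :
    minner M M = frob M ^ 2 := by
  rw [minner_eq_sum, frob_sq]
  simp [sq]

/-- Cauchy–Schwarz for the trace inner product. -/
lemma minner_ge_neg {m n : Type*} [Fintype m] [Fintype n] (A B : Matrix m n ℝ) :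
    minner A B ≥ -(frob A * frob B) := by
  have h1 : (minner A B) ^ 2 ≤ (frob A) ^ 2 * (frob B) ^ 2 := by
    rw [minner_eq_sum, frob_sq, frob_sq]
    have := Finset.sum_mul_sq_le_sq_mul_sq (Finset.univ : Finset (m × n))
      (fun p => A p.1 p.2) (fun p => B p.1 p.2)
    simpa [Fintype.sum_prod_type] using this
  nlinarith [frob_nonneg A, frob_nonneg B, mul_nonneg (frob_nonneg A) (frob_nonneg B)]

/-- `‖AᵀA‖_F ≤ ‖A‖_F²`. -/
lemma frob_transpose_mul_self_le {m n : Type*} [Fintype m] [Fintype n]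
    (A : Matrix m n ℝ) : frob (Aᵀ * A) ≤ frob A ^ 2 := by
  have key : ∑ j, ∑ k, ((Aᵀ * A) j k) ^ 2 ≤ (∑ i, ∑ j, (A i j) ^ 2) ^ 2 := by
    have h1 : ∀ j k : n, ((Aᵀ * A) j k) ^ 2 ≤ (∑ i, (A i j) ^ 2) * (∑ i, (A i k) ^ 2) := by
      intro j k
      have := Finset.sum_mul_sq_le_sq_mul_sq (Finset.univ : Finset m)
        (fun i => A i j) (fun i => A i k)
      simpa [Matrix.mul_apply, Matrix.transpose_apply] using this
    calc ∑ j, ∑ k, ((Aᵀ * A) j k) ^ 2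
        ≤ ∑ j, ∑ k, (∑ i, (A i j) ^ 2) * (∑ i, (A i k) ^ 2) := by
          apply Finset.sum_le_sum; intro j _
          apply Finset.sum_le_sum; intro k _
          exact h1 j k
      _ = (∑ j, ∑ i, (A i j) ^ 2) ^ 2 := by
          rw [sq, Finset.sum_mul_sum]
      _ = (∑ i, ∑ j, (A i j) ^ 2) ^ 2 := by rw [Finset.sum_comm]
  have h2 : frob (Aᵀ * A) ^ 2 ≤ (frob A ^ 2) ^ 2 := by
    rw [frob_sq]
    calc ∑ j, ∑ k, ((Aᵀ * A) j k) ^ 2 ≤ (∑ i, ∑ j, (A i j) ^ 2) ^ 2 := key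
      _ = (frob A ^ 2) ^ 2 := by rw [frob_sq]
  have hA2 : 0 ≤ frob A ^ 2 := sq_nonneg _
  nlinarith [frob_nonneg (Aᵀ * A)]

/-- For `U*ᵀU* = b²I`, `R` orthogonal, and `‖U − U*R‖_F² ≤ C₁`:
`⟨U(UᵀU − b²I), U − U*R⟩ ≥ ¼‖UᵀU − b²I‖_F² − ¼‖U − U*R‖_F⁴
  ≥ ¼‖UᵀU − b²I‖_F² − (C₁/4)‖U − U*R‖_F²`. -/
theorem regularizer_cross_lower_bound {N r : ℕ}
    (U Ustar : Matrix (Fin N) (Fin r) ℝ) (R : Matrix (Fin r) (Fin r) ℝ)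
    (b C₁ : ℝ) (hb : 0 < b) (hC₁ : 0 ≤ C₁)
    (hUstar : Ustarᵀ * Ustar = (b ^ 2) • (1 : Matrix (Fin r) (Fin r) ℝ))
    (hR : Rᵀ * R = 1)
    (hclose : (frob (U - Ustar * R)) ^ 2 ≤ C₁) :
    minner (U * (Uᵀ * U - (b ^ 2) • (1 : Matrix (Fin r) (Fin r) ℝ))) (U - Ustar * R) ≥
      1 / 4 * (frob (Uᵀ * U - (b ^ 2) • (1 : Matrix (Fin r) (Fin r) ℝ))) ^ 2 -
        1 / 4 * (frob (U - Ustar * R)) ^ 4 ∧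
    1 / 4 * (frob (Uᵀ * U - (b ^ 2) • (1 : Matrix (Fin r) (Fin r) ℝ))) ^ 2 -
        1 / 4 * (frob (U - Ustar * R)) ^ 4 ≥
      1 / 4 * (frob (Uᵀ * U - (b ^ 2) • (1 : Matrix (Fin r) (Fin r) ℝ))) ^ 2 -
        C₁ / 4 * (frob (U - Ustar * R)) ^ 2 := by
  set W : Matrix (Fin r) (Fin r) ℝ := Uᵀ * U - (b ^ 2) • 1 with hW
  set Δ : Matrix (Fin N) (Fin r) ℝ := U - Ustar * R with hΔ
  have hWsym : Wᵀ = W := by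
    rw [hW]
    simp [Matrix.transpose_sub, Matrix.transpose_mul, Matrix.transpose_smul]
  -- ΔᵀΔ = UᵀU - UᵀUstarR - RᵀUstarᵀU + b²•1
  have hΔΔ : Δᵀ * Δ = Uᵀ * U - Uᵀ * (Ustar * R) - Rᵀ * Ustarᵀ * U + (b ^ 2) • 1 := by
    rw [hΔ]
    rw [Matrix.transpose_sub, Matrix.transpose_mul, Matrix.sub_mul, Matrix.mul_sub,
        Matrix.mul_sub]
    have : Rᵀ * Ustarᵀ * (Ustar * R) = (b ^ 2) • 1 := by
      rw [Matrix.mul_assoc, ← Matrix.mul_assoc Ustarᵀ Ustar R, hUstar,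
          Matrix.smul_mul, Matrix.one_mul, Matrix.mul_smul, hR]
    rw [this]
    abel
  -- trace (W * (Rᵀ * Ustarᵀ * U)) = trace (W * (Uᵀ * (Ustar * R)))
  have htr : Matrix.trace (W * (Rᵀ * Ustarᵀ * U)) =
      Matrix.trace (W * (Uᵀ * (Ustar * R))) := by
    conv_lhs => rw [← Matrix.trace_transpose, Matrix.transpose_mul, hWsym]
    rw [Matrix.trace_mul_comm]
    congr 1
    simp [Matrix.transpose_mul, Matrix.mul_assoc]
  -- Key identity: 2 * minner (U * W) Δ = minner W (Δᵀ * Δ) + minner W W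
  have key : 2 * minner (U * W) Δ = minner W (Δᵀ * Δ) + minner W W := by
    unfold minner
    rw [Matrix.transpose_mul, hWsym, Matrix.mul_assoc, hΔΔ]
    have expand : Uᵀ * Δ = Uᵀ * U - Uᵀ * (Ustar * R) := by
      rw [hΔ, Matrix.mul_sub]
    have hWW : W * W = W * (Uᵀ * U) - W * ((b ^ 2) • 1) := by
      rw [← Matrix.mul_sub, ← hW]
    rw [expand, hWW]
    simp only [Matrix.mul_sub, Matrix.mul_add, Matrix.trace_sub, Matrix.trace_add]
    linarith [htr]
  -- bounds
  have h1 : minner W (Δᵀ * Δ) ≥ -(frob W * frob Δ ^ 2) := by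
    have := minner_ge_neg W (Δᵀ * Δ)
    have hle := frob_transpose_mul_self_le Δ
    nlinarith [frob_nonneg W, frob_nonneg (Δᵀ * Δ)]
  have h2 : minner W W = frob W ^ 2 := minner_self W
  have hfΔ : 0 ≤ frob Δ := frob_nonneg Δ
  have hfW : 0 ≤ frob W := frob_nonneg W
  constructor
  · have hamgm : frob W * frob Δ ^ 2 ≤ 1 / 2 * frob W ^ 2 + 1 / 2 * (frob Δ ^ 2) ^ 2 := by
      nlinarith [sq_nonneg (frob W - frob Δ ^ 2)]
    have h4 : frob Δ ^ 4 = (frob Δ ^ 2) ^ 2 := by ring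
    rw [ge_iff_le]
    nlinarith [key, h1, h2]
  · have h4 : frob Δ ^ 4 = (frob Δ ^ 2) ^ 2 := by ring
    have : (frob Δ ^ 2) ^ 2 ≤ C₁ * frob Δ ^ 2 := by
      nlinarith [sq_nonneg (frob Δ)]
    rw [ge_iff_le]
    nlinarith
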